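/- Let τ > 0 and let γ_τ be the Gaussian measure on ℝ with mean 0 and variance τ. Then for every s ∈ ℝ and every f ∈ L²(ℝ; ℂ) with ‖f‖_{H^{s+4}} < ∞, the second-order estimate on the expected propagator holds: ∫_ℝ (1+|ξ|²)^s · | ∫_ℝ (e^{−i x |ξ|²} − 1) dγ_τ(x) |² · |𝓕f(ξ)|² dξ ≤ (τ²/4) · ‖f‖_{H^{s+4}}². (This is the key estimate ‖E(S(t_n,r) − I) g‖²_{H^s} ≲ (r − t_n)² ‖g‖²_{H^{s+4}}, which follows from the Gaussian characteristic function identity ∫ e^{−i x ξ²} dγ_τ(x) = e^{−τ ξ⁴/2} and the inequality |e^{−y} − 1| ≤ y for y ≥ 0, and which yields local order two in the splitting scheme analysis.) -/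

import Mathlib

open MeasureTheory Complex Real
open scoped ENNReal NNReal FourierTransform ComplexConjugate

noncomputable section

/-- `L²(ℝ; ℂ)`. -/
abbrev L2 : Type := Lp ℂ 2 (volume : Measure ℝ)

/-- `F` is the Fourier–Plancherel transform on `L²(ℝ; ℂ)`: a unitary operator that agrees
with the Fourier integral `𝓕 f (ξ) = ∫ e^{−2πixξ} f(x) dx` on `L¹ ∩ L²`. -/
def IsFourierPlancherel (F : L2 ≃ₗᵢ[ℂ] L2) : Prop :=
  ∀ (f : ℝ → ℂ) (_ : Integrable f (volume : Measure ℝ))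
    (hf2 : MemLp f 2 (volume : Measure ℝ)),
    (F (hf2.toLp f) : ℝ → ℂ) =ᵐ[volume] 𝓕 f

/-- Multiplication by a bounded continuous symbol maps `L²` to `L²`. -/
lemma memℒp_mul_symbol (m : ℝ → ℂ) (hm : Continuous m) (hm1 : ∀ ξ, ‖m ξ‖ ≤ 1)
    (g : L2) : MemLp (fun ξ => m ξ * (g : ℝ → ℂ) ξ) 2 (volume : Measure ℝ) := by
  refine ⟨hm.aestronglyMeasurable.mul (Lp.aestronglyMeasurable g), ?_⟩
  refine lt_of_le_of_lt (eLpNorm_mono fun x => ?_) (Lp.eLpNorm_lt_top g)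
  rw [norm_mul]
  calc ‖m x‖ * ‖(g : ℝ → ℂ) x‖ ≤ 1 * ‖(g : ℝ → ℂ) x‖ := by
        gcongr; exact hm1 x
    _ = ‖(g : ℝ → ℂ) x‖ := one_mul _

/-- The Fourier multiplier operator `f ↦ 𝓕⁻¹ (m ⬝ 𝓕 f)` with bounded continuous symbol. -/
def fourierMult (F : L2 ≃ₗᵢ[ℂ] L2) (m : ℝ → ℂ) (hm : Continuous m)
    (hm1 : ∀ ξ, ‖m ξ‖ ≤ 1) (f : L2) : L2 :=
  F.symm ((memℒp_mul_symbol m hm hm1 (F f)).toLp _)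

/-- The squared `H^s` norm `‖f‖²_{H^s} = ∫ (1+|ξ|²)^s |𝓕f(ξ)|² dξ ∈ [0,∞]`. -/
def HsNormSq (F : L2 ≃ₗᵢ[ℂ] L2) (s : ℝ) (f : L2) : ℝ≥0∞ :=
  ∫⁻ ξ : ℝ, ENNReal.ofReal ((1 + |ξ| ^ 2) ^ s) * (‖(F f : ℝ → ℂ) ξ‖₊ : ℝ≥0∞) ^ 2

/-- The `H^s` norm `‖f‖_{H^s} ∈ [0,∞]`. -/
def HsNorm (F : L2 ≃ₗᵢ[ℂ] L2) (s : ℝ) (f : L2) : ℝ≥0∞ :=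
  HsNormSq F s f ^ (1 / 2 : ℝ)

lemma Sprop_symbol_cont (τ : ℝ) :
    Continuous fun ξ : ℝ => Complex.exp (-Complex.I * (τ : ℂ) * (ξ : ℂ) ^ 2) := by
  fun_prop

lemma Sprop_symbol_norm (τ : ℝ) (ξ : ℝ) :
    ‖Complex.exp (-Complex.I * (τ : ℂ) * (ξ : ℂ) ^ 2)‖ ≤ 1 := by
  have h : -Complex.I * (τ : ℂ) * (ξ : ℂ) ^ 2 = ((-(τ * ξ ^ 2) : ℝ) : ℂ) * Complex.I := by
    push_cast; ring
  rw [h, Complex.norm_exp_ofReal_mul_I]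

/-- The linear propagator `S_τ = 𝓕⁻¹ e^{−iτ|ξ|²} 𝓕` of `i du + Δu ∘ dW = 0`. -/
def Sprop (F : L2 ≃ₗᵢ[ℂ] L2) (τ : ℝ) : L2 → L2 :=
  fourierMult F (fun ξ : ℝ => Complex.exp (-Complex.I * (τ : ℂ) * (ξ : ℂ) ^ 2))
    (Sprop_symbol_cont τ) (Sprop_symbol_norm τ)


open ProbabilityTheory in
lemma gauss_char (τ : ℝ) (hτ : 0 < τ) (c : ℝ) :
    ∫ x : ℝ, Complex.exp (-Complex.I * (x : ℂ) * (c : ℂ)) ∂(gaussianReal 0 τ.toNNReal)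
      = Complex.exp (-((τ * c ^ 2) / 2 : ℝ) : ℂ) := by
  have hv : τ.toNNReal ≠ 0 := by
    simp [Real.toNNReal_eq_zero, not_le, hτ]
  have hτ' : ((τ.toNNReal : ℝ)) = τ := Real.coe_toNNReal τ hτ.le
  have hmeas : Measurable fun x : ℝ => (gaussianPDFReal 0 τ.toNNReal x).toNNReal :=
    (measurable_gaussianPDFReal 0 τ.toNNReal).real_toNNReal
  have hb : (0:ℝ) < ((1 / (2*τ) : ℂ)).re := by
    simp only [one_div, Complex.inv_re]
    rw [show ((2*τ:ℂ)) = ((2*τ:ℝ):ℂ) by push_cast; ring]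
    simp [Complex.normSq_ofReal]
    positivity
  have key := fourierIntegral_gaussian (b := (1 / (2*τ) : ℂ)) hb (-(c:ℂ))
  rw [gaussianReal_of_var_ne_zero 0 hv,
    show gaussianPDF 0 τ.toNNReal = fun x => ((gaussianPDFReal 0 τ.toNNReal x).toNNReal : ℝ≥0∞) from rfl,
    integral_withDensity_eq_integral_smul hmeas]
  have hsqrt : (0:ℝ) < Real.sqrt (2 * π * τ) := Real.sqrt_pos.mpr (by positivity)
  calc ∫ x : ℝ, (gaussianPDFReal 0 τ.toNNReal x).toNNReal • Complex.exp (-Complex.I * x * c)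
      = ∫ x : ℝ, ((Real.sqrt (2*π*τ) : ℝ):ℂ)⁻¹ *
          (Complex.exp (Complex.I * (-(c:ℂ)) * x) * Complex.exp (-(1/(2*τ):ℂ) * x^2)) := by
        congr 1 with x
        rw [NNReal.smul_def, Real.coe_toNNReal _ (gaussianPDFReal_nonneg 0 τ.toNNReal x)]
        rw [gaussianPDFReal, Complex.real_smul, hτ']
        push_cast
        rw [← Complex.exp_add, mul_assoc]
        congr 2
        field_simp; rw [← Complex.exp_add]; ring_nf
    _ = ((Real.sqrt (2*π*τ) : ℝ):ℂ)⁻¹ * ((π / (1/(2*τ):ℂ)) ^ (1/2 : ℂ) *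
          Complex.exp (-(-(c:ℂ)) ^ 2 / (4 * (1/(2*τ):ℂ)))) := by
        rw [MeasureTheory.integral_const_mul, key]
    _ = Complex.exp (-((τ * c ^ 2) / 2 : ℝ) : ℂ) := by
        have h1 : (π / (1/(2*τ):ℂ)) = ((2*π*τ : ℝ) : ℂ) := by
          push_cast; field_simp
        have h2 : ((2*π*τ : ℝ) : ℂ) ^ (1/2 : ℂ) = ((Real.sqrt (2*π*τ) : ℝ) : ℂ) := by
          rw [Real.sqrt_eq_rpow, Complex.ofReal_cpow (by positivity)]
          norm_num
        have h3 : -(-(c:ℂ)) ^ 2 / (4 * (1/(2*τ):ℂ)) = (-((τ * c ^ 2) / 2 : ℝ) : ℂ) := by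
          push_cast; field_simp; ring
        rw [h1, h2, h3, ← mul_assoc, inv_mul_cancel₀ (by exact_mod_cast hsqrt.ne'), one_mul]

open ProbabilityTheory in
lemma gauss_int (τ : ℝ) (hτ : 0 < τ) (c : ℝ) :
    ∫ x : ℝ, (Complex.exp (-Complex.I * (x : ℂ) * (c : ℂ)) - 1) ∂(gaussianReal 0 τ.toNNReal)
      = Complex.exp (-((τ * c ^ 2) / 2 : ℝ) : ℂ) - 1 := by
  have hint : Integrable (fun x : ℝ => Complex.exp (-Complex.I * (x : ℂ) * (c : ℂ)))
      (gaussianReal 0 τ.toNNReal) := by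
    refine Integrable.mono' (integrable_const (1:ℝ)) ?_ ?_
    · exact (Continuous.aestronglyMeasurable (by fun_prop))
    · filter_upwards with x
      have h : -Complex.I * (x:ℂ) * (c:ℂ) = ((-(x * c) : ℝ) : ℂ) * Complex.I := by
        push_cast; ring
      rw [h, Complex.norm_exp_ofReal_mul_I]
  rw [integral_sub hint (integrable_const 1), integral_const, gauss_char τ hτ c]
  simp

lemma exp_sub_one_norm (y : ℝ) (hy : 0 ≤ y) :
    ‖Complex.exp ((-y : ℝ) : ℂ) - 1‖ ≤ y := by
  rw [← Complex.ofReal_exp, ← Complex.ofReal_one, ← Complex.ofReal_sub,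
    Complex.norm_real, Real.norm_eq_abs, abs_sub_comm,
    _root_.abs_of_nonneg (by nlinarith [Real.exp_le_one_iff.mpr (neg_nonpos.mpr hy)] : (0:ℝ) ≤ 1 - rexp (-y))]
  have := Real.add_one_le_exp (-y)
  linarith

open ProbabilityTheory in
/-- second-order estimate on the expected propagator: for the centered
Gaussian measure `γ_τ` with variance `τ > 0` and `f` with finite `H^{s+4}` norm,
`∫ (1+|ξ|²)^s |∫ (e^{−ix|ξ|²} − 1) dγ_τ(x)|² |𝓕f(ξ)|² dξ ≤ (τ²/4) ‖f‖²_{H^{s+4}}`. -/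
theorem stmt_9 (F : L2 ≃ₗᵢ[ℂ] L2) (hF : IsFourierPlancherel F)
    (τ : ℝ) (hτ : 0 < τ) (s : ℝ) (f : L2) (hf : HsNorm F (s + 4) f < ⊤) :
    ∫⁻ ξ : ℝ, ENNReal.ofReal ((1 + |ξ| ^ 2) ^ s)
        * (‖∫ x : ℝ, (Complex.exp (-Complex.I * (x : ℂ) * (ξ : ℂ) ^ 2) - 1)
              ∂(gaussianReal 0 τ.toNNReal)‖₊ : ℝ≥0∞) ^ 2
        * (‖(F f : ℝ → ℂ) ξ‖₊ : ℝ≥0∞) ^ 2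
      ≤ ENNReal.ofReal (τ ^ 2 / 4) * HsNormSq F (s + 4) f := by
  have hmain : ∀ ξ : ℝ,
      ENNReal.ofReal ((1 + |ξ| ^ 2) ^ s)
        * (‖∫ x : ℝ, (Complex.exp (-Complex.I * (x : ℂ) * (ξ : ℂ) ^ 2) - 1)
              ∂(gaussianReal 0 τ.toNNReal)‖₊ : ℝ≥0∞) ^ 2
        * (‖(F f : ℝ → ℂ) ξ‖₊ : ℝ≥0∞) ^ 2
      ≤ ENNReal.ofReal (τ ^ 2 / 4) *
          (ENNReal.ofReal ((1 + |ξ| ^ 2) ^ (s + 4)) * (‖(F f : ℝ → ℂ) ξ‖₊ : ℝ≥0∞) ^ 2) := by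
    intro ξ
    have hApos : (0:ℝ) < 1 + |ξ| ^ 2 := by positivity
    set A : ℝ := 1 + |ξ| ^ 2 with hA
    set y : ℝ := τ * (ξ ^ 2) ^ 2 / 2 with hy'
    have hy : 0 ≤ y := by positivity
    set I : ℂ := ∫ x : ℝ, (Complex.exp (-Complex.I * (x : ℂ) * (ξ : ℂ) ^ 2) - 1)
              ∂(gaussianReal 0 τ.toNNReal) with hI
    have hIeq : I = Complex.exp ((-y : ℝ) : ℂ) - 1 := by
      rw [hI, show ((ξ:ℂ)^2) = (((ξ^2 : ℝ)):ℂ) by push_cast; ring, gauss_int τ hτ (ξ^2)]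
      norm_num [hy']
    have hnorm : ‖I‖ ≤ y := by rw [hIeq]; exact exp_sub_one_norm y hy
    have hsq : ((‖I‖₊ : ℝ≥0∞)) ^ 2 ≤ ENNReal.ofReal (y ^ 2) := by
      rw [← enorm_eq_nnnorm, ← ofReal_norm, ← ENNReal.ofReal_pow (norm_nonneg _)]
      exact ENNReal.ofReal_le_ofReal (pow_le_pow_left₀ (norm_nonneg _) hnorm 2)
    have hreal : A ^ s * y ^ 2 ≤ τ ^ 2 / 4 * A ^ (s + 4) := by
      have h1 : ξ ^ 2 ≤ A := by rw [hA, ← _root_.sq_abs ξ]; linarith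
      have h2 : (ξ ^ 2) ^ 4 ≤ A ^ 4 := pow_le_pow_left₀ (sq_nonneg ξ) h1 4
      have h3 : A ^ (s + 4) = A ^ s * A ^ (4:ℕ) := by
        rw [Real.rpow_add hApos, show ((4:ℝ)) = ((4:ℕ):ℝ) by norm_num, Real.rpow_natCast]
      rw [h3]
      have hAs : (0:ℝ) ≤ A ^ s := Real.rpow_nonneg hApos.le s
      calc A ^ s * y ^ 2 = τ ^ 2 / 4 * (A ^ s * (ξ ^ 2) ^ 4) := by rw [hy']; ring
        _ ≤ τ ^ 2 / 4 * (A ^ s * A ^ 4) := by gcongr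
        _ = τ ^ 2 / 4 * (A ^ s * A ^ (4:ℕ)) := by norm_num
    calc ENNReal.ofReal (A ^ s) * (‖I‖₊ : ℝ≥0∞) ^ 2 * (‖(F f : ℝ → ℂ) ξ‖₊ : ℝ≥0∞) ^ 2
        ≤ ENNReal.ofReal (A ^ s) * ENNReal.ofReal (y ^ 2)
            * (‖(F f : ℝ → ℂ) ξ‖₊ : ℝ≥0∞) ^ 2 := by gcongr
      _ = ENNReal.ofReal (A ^ s * y ^ 2) * (‖(F f : ℝ → ℂ) ξ‖₊ : ℝ≥0∞) ^ 2 := by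
          rw [← ENNReal.ofReal_mul (Real.rpow_nonneg hApos.le s)]
      _ ≤ ENNReal.ofReal (τ ^ 2 / 4 * A ^ (s + 4)) * (‖(F f : ℝ → ℂ) ξ‖₊ : ℝ≥0∞) ^ 2 :=
          mul_le_mul_left (ENNReal.ofReal_le_ofReal hreal) _
      _ = ENNReal.ofReal (τ ^ 2 / 4) *
            (ENNReal.ofReal (A ^ (s + 4)) * (‖(F f : ℝ → ℂ) ξ‖₊ : ℝ≥0∞) ^ 2) := by
          rw [ENNReal.ofReal_mul (by positivity), mul_assoc]
  calc ∫⁻ ξ : ℝ, ENNReal.ofReal ((1 + |ξ| ^ 2) ^ s)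
        * (‖∫ x : ℝ, (Complex.exp (-Complex.I * (x : ℂ) * (ξ : ℂ) ^ 2) - 1)
              ∂(gaussianReal 0 τ.toNNReal)‖₊ : ℝ≥0∞) ^ 2
        * (‖(F f : ℝ → ℂ) ξ‖₊ : ℝ≥0∞) ^ 2
      ≤ ∫⁻ ξ : ℝ, ENNReal.ofReal (τ ^ 2 / 4) *
          (ENNReal.ofReal ((1 + |ξ| ^ 2) ^ (s + 4)) * (‖(F f : ℝ → ℂ) ξ‖₊ : ℝ≥0∞) ^ 2) :=
        lintegral_mono hmain
    _ = ENNReal.ofReal (τ ^ 2 / 4) * HsNormSq F (s + 4) f := by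
        rw [lintegral_const_mul' _ _ ENNReal.ofReal_ne_top]; rfl


end
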